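/- Let d ≥ 1 and let ψ : Fin d × Fin d → ℂ be the maximally entangled (generalized Bell) unit vector ψ(j,k) = (1/√d) if j = k and 0 otherwise, with density matrix ρ = ψ·ψᴴ, i.e. ρ((j,k),(j',k')) = ψ(j,k)·conj(ψ(j',k')). Then ‖ρ^{T_B}‖₁ = d while ‖ρ‖₁ = 1; hence the bound ‖ρ^{T_B}‖₁ ≤ min(d_A, d_B)·‖ρ‖₁ is tight. -/

import Mathlib

open Matrix
open scoped ComplexOrder

/-- The matrix absolute value `|X|`: the unique positive semidefinite square root of `Xᴴ * X`. -/
noncomputable def matAbs {n : Type*} [Fintype n] [DecidableEq n] (X : Matrix n n ℂ) :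
    Matrix n n ℂ :=
  (Matrix.posSemidef_conjTranspose_mul_self X).isHermitian.eigenvectorUnitary.1 *
    diagonal ((↑) ∘ (fun x : ℝ => Real.sqrt x) ∘
      (Matrix.posSemidef_conjTranspose_mul_self X).isHermitian.eigenvalues) *
    (star (Matrix.posSemidef_conjTranspose_mul_self X).isHermitian.eigenvectorUnitary :
      Matrix n n ℂ)

/-- The trace norm `‖X‖₁ = trace |X|` (a real number). -/
noncomputable def traceNorm {n : Type*} [Fintype n] [DecidableEq n] (X : Matrix n n ℂ) : ℝ :=
  ((matAbs X).trace).re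

/-- Partial transpose over the second tensor factor:
`ρ^{T_B} ((a,b),(a',b')) = ρ ((a,b'),(a',b))`. -/
def ptransB {ιA ιB : Type*} (ρ : Matrix (ιA × ιB) (ιA × ιB) ℂ) :
    Matrix (ιA × ιB) (ιA × ιB) ℂ :=
  Matrix.of fun p q => ρ (p.1, q.2) (q.1, p.2)

lemma matAbs_eq {n : Type*} [Fintype n] [DecidableEq n] (X M : Matrix n n ℂ)
    (hM : M.PosSemidef) (h : M ^ 2 = Xᴴ * X) : matAbs X = M :=
  by
    open scoped MatrixOrder in
    have hA := Matrix.posSemidef_conjTranspose_mul_self X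
    have h1 : matAbs X = cfc Real.sqrt (Xᴴ * X) := by
      rw [hA.isHermitian.cfc_eq, IsHermitian.cfc, Unitary.conjStarAlgAut_apply]; rfl
    rw [h1, ← cfcₙ_eq_cfc (hf0 := Real.sqrt_zero), ← CFC.sqrt_eq_real_sqrt (Xᴴ * X) hA.nonneg]
    exact CFC.sqrt_unique (by rw [← sq]; exact h) hM.nonneg

/-- **The maximally entangled state saturates the partial-transpose trace-norm bound.**
For the generalized Bell state `ψ (j,k) = (1/√d)·δ_{jk}` on `Fin d × Fin d` with density
matrix `ρ = ψ·ψᴴ`, one has `‖ρ^{T_B}‖₁ = d` while `‖ρ‖₁ = 1`. -/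
theorem bell_state_traceNorm_ptransB (d : ℕ) (hd : 1 ≤ d)
    (ψ : Fin d × Fin d → ℂ)
    (hψ : ∀ p : Fin d × Fin d,
      ψ p = if p.1 = p.2 then ((Real.sqrt d : ℂ))⁻¹ else 0)
    (ρ : Matrix (Fin d × Fin d) (Fin d × Fin d) ℂ)
    (hρ : ∀ p q, ρ p q = ψ p * (starRingEnd ℂ) (ψ q)) :
    traceNorm (ptransB ρ) = d ∧ traceNorm ρ = 1 := by
  have hd0 : (0:ℝ) ≤ d := Nat.cast_nonneg d
  have hdC : ((d:ℂ)) ≠ 0 := Nat.cast_ne_zero.mpr (by omega)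
  have hsq : ((Real.sqrt d : ℂ))⁻¹ * ((Real.sqrt d : ℂ))⁻¹ = (d:ℂ)⁻¹ := by
    rw [← mul_inv]
    norm_cast
    rw [Real.mul_self_sqrt hd0]
    push_cast
    ring
  -- entries of ρ
  have hρ' : ∀ p q : Fin d × Fin d, ρ p q =
      if p.1 = p.2 ∧ q.1 = q.2 then (d:ℂ)⁻¹ else 0 := by
    intro p q
    rw [hρ, hψ, hψ]
    by_cases h1 : p.1 = p.2 <;> by_cases h2 : q.1 = q.2 <;>
      simp [h1, h2, hsq, Complex.conj_inv, Complex.conj_ofReal]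
  -- normalization sum
  have hnorm : ∑ r : Fin d × Fin d, (starRingEnd ℂ) (ψ r) * ψ r = 1 := by
    simp_rw [hψ]
    rw [Fintype.sum_prod_type]
    simp only [apply_ite (starRingEnd ℂ), map_zero, ite_mul, zero_mul, mul_ite, mul_zero,
      Complex.conj_inv, Complex.conj_ofReal]
    simp [hsq, Finset.sum_ite_eq, mul_inv_cancel₀ hdC]
  -- ρ is PSD
  have hρPSD : ρ.PosSemidef := by
    have : ρ = (Matrix.of fun r p => (starRingEnd ℂ) (ψ r) * (starRingEnd ℂ) (ψ p))ᴴ *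
        (Matrix.of fun r p => (starRingEnd ℂ) (ψ r) * (starRingEnd ℂ) (ψ p)) := by
      ext p q
      simp only [Matrix.mul_apply, Matrix.conjTranspose_apply, Matrix.of_apply, star_mul',
        RCLike.star_def, Complex.conj_conj, hρ]
      have key : ∀ x : Fin d × Fin d,
          ψ x * ψ p * ((starRingEnd ℂ) (ψ x) * (starRingEnd ℂ) (ψ q)) =
          ((starRingEnd ℂ) (ψ x) * ψ x) * (ψ p * (starRingEnd ℂ) (ψ q)) := fun x => by ring
      simp_rw [key]
      rw [← Finset.sum_mul, hnorm, one_mul]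
    rw [this]
    exact Matrix.posSemidef_conjTranspose_mul_self _
  have hρherm : ρᴴ = ρ := hρPSD.1
  have hρsq : ρ ^ 2 = ρᴴ * ρ := by
    rw [hρherm, pow_two]
  have habsρ : matAbs ρ = ρ := matAbs_eq ρ ρ hρPSD hρsq
  -- trace of ρ
  have htrρ : ρ.trace = 1 := by
    rw [Matrix.trace, ← hnorm]
    exact Finset.sum_congr rfl fun p _ => by rw [Matrix.diag_apply, hρ]; ring
  -- the partial transpose
  set σ := ptransB ρ with hσdef
  have hσ : ∀ p q : Fin d × Fin d, σ p q =
      if p.1 = q.2 ∧ q.1 = p.2 then (d:ℂ)⁻¹ else 0 := by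
    intro p q
    show ρ (p.1, q.2) (q.1, p.2) = _
    rw [hρ']
  have hM : ((d:ℂ)⁻¹ • (1 : Matrix (Fin d × Fin d) (Fin d × Fin d) ℂ)).PosSemidef := by
    have : ((d:ℂ)⁻¹ • (1 : Matrix (Fin d × Fin d) (Fin d × Fin d) ℂ)) =
        (((Real.sqrt d : ℂ))⁻¹ • (1 : Matrix (Fin d × Fin d) (Fin d × Fin d) ℂ))ᴴ *
        (((Real.sqrt d : ℂ))⁻¹ • (1 : Matrix (Fin d × Fin d) (Fin d × Fin d) ℂ)) := by
      rw [Matrix.conjTranspose_smul, Matrix.conjTranspose_one, Matrix.smul_mul,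
        Matrix.mul_smul, Matrix.one_mul, smul_smul]
      congr 1
      rw [← hsq]
      congr 1
      simp [Complex.conj_inv, Complex.conj_ofReal]
    rw [this]
    exact Matrix.posSemidef_conjTranspose_mul_self _
  have hσsq : ((d:ℂ)⁻¹ • (1 : Matrix (Fin d × Fin d) (Fin d × Fin d) ℂ)) ^ 2 = σᴴ * σ := by
    have hMsq : ((d:ℂ)⁻¹ • (1 : Matrix (Fin d × Fin d) (Fin d × Fin d) ℂ)) ^ 2 =
        ((d:ℂ)⁻¹ * (d:ℂ)⁻¹) • (1 : Matrix (Fin d × Fin d) (Fin d × Fin d) ℂ) := by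
      rw [pow_two, Matrix.smul_mul, Matrix.mul_smul, Matrix.one_mul, smul_smul]
    rw [hMsq]
    ext p q
    rw [Matrix.mul_apply, Matrix.smul_apply, Matrix.one_apply, smul_eq_mul]
    have : ∀ r : Fin d × Fin d, (σᴴ) p r * σ r q = (starRingEnd ℂ) (σ r p) * σ r q := fun r => rfl
    rw [Finset.sum_eq_single ((p.2, p.1) : Fin d × Fin d)]
    · rw [Matrix.conjTranspose_apply, hσ, hσ]
      simp only [RCLike.star_def]
      by_cases h : p = q
      · subst h
        simp [map_inv₀, Complex.conj_natCast]
      · have h' : ¬((p.2 : Fin d) = q.2 ∧ q.1 = p.1) := by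
          intro ⟨h1, h2⟩; exact h (Prod.ext h2.symm h1)
        simp [h, h']
    · intro r _ hr
      rw [Matrix.conjTranspose_apply, hσ]
      have : ¬((r.1 : Fin d) = p.2 ∧ p.1 = r.2) := by
        intro ⟨h1, h2⟩; exact hr (Prod.ext h1 h2.symm)
      simp [this]
    · intro h; exact absurd (Finset.mem_univ _) h
  have habsσ : matAbs σ = (d:ℂ)⁻¹ • 1 := matAbs_eq σ _ hM hσsq
  constructor
  · rw [traceNorm, habsσ, Matrix.trace_smul, Matrix.trace_one]
    simp only [Fintype.card_prod, Fintype.card_fin, smul_eq_mul]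
    rw [show ((d*d : ℕ) : ℂ) = (d:ℂ) * d by push_cast; ring]
    rw [← mul_assoc, inv_mul_cancel₀ hdC, one_mul]
    simp
  · rw [traceNorm, habsρ, htrρ]; simp
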